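/- Let μ' and ν be locally finite Borel measures on ℝ^m with μ' absolutely continuous with respect to ν. Then μ'-almost every y ∈ ℝ^m is a bounded (μ',ν)-density point. -/

import Mathlib

open MeasureTheory Filter Metric
open scoped ENNReal

/-- `y` is a `μ`-density point of the set `A`. -/
def IsDensityPoint {m : ℕ} (μ : Measure (EuclideanSpace ℝ (Fin m)))
    (y : EuclideanSpace ℝ (Fin m)) (A : Set (EuclideanSpace ℝ (Fin m))) : Prop :=
  Tendsto (fun r : ℝ => μ (ball y r ∩ A) / μ (ball y r))
    (nhdsWithin 0 (Set.Ioi 0)) (nhds 1)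

/-- `y` is a bounded `(μ', ν)`-density point. -/
def IsBoundedDensityPoint {m : ℕ} (μ' ν : Measure (EuclideanSpace ℝ (Fin m)))
    (y : EuclideanSpace ℝ (Fin m)) : Prop :=
  ∃ N : ℝ, 0 < N ∧
    IsDensityPoint ν y
      {x | ENNReal.ofReal (1 / N) ≤ μ'.rnDeriv ν x ∧ μ'.rnDeriv ν x ≤ ENNReal.ofReal N} ∧
    IsDensityPoint μ' y
      {x | ENNReal.ofReal (1 / N) ≤ μ'.rnDeriv ν x ∧ μ'.rnDeriv ν x ≤ ENNReal.ofReal N}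

lemma aux_ball_of_closedBall {m : ℕ} (μ : Measure (EuclideanSpace ℝ (Fin m)))
    [IsLocallyFiniteMeasure μ] (y : EuclideanSpace ℝ (Fin m))
    (A : Set (EuclideanSpace ℝ (Fin m)))
    (h : Tendsto (fun r : ℝ => μ (A ∩ closedBall y r) / μ (closedBall y r))
      (nhdsWithin 0 (Set.Ioi 0)) (nhds 1)) :
    Tendsto (fun r : ℝ => μ (ball y r ∩ A) / μ (ball y r))
      (nhdsWithin 0 (Set.Ioi 0)) (nhds 1) := by
  -- finite measure on a small ball
  obtain ⟨U, hU, hUfin⟩ := μ.finiteAt_nhds y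
  obtain ⟨R, hR, hRU⟩ := Metric.mem_nhds_iff.1 hU
  rw [ENNReal.tendsto_nhds ENNReal.one_ne_top] at h ⊢
  intro ε hε
  set ε' : ℝ≥0∞ := min ε (1/2) with hε'def
  have hε' : 0 < ε' := lt_min hε (by norm_num)
  obtain ⟨r0, hr0, hr0sub⟩ := mem_nhdsGT_iff_exists_Ioc_subset.1 (h ε' hε')
  have key : ∀ s : ℝ, s ∈ Set.Ioc (0:ℝ) (min r0 (R/2)) →
      (1 - ε') * μ (closedBall y s) ≤ μ (A ∩ closedBall y s) ∧ μ (A ∩ closedBall y s) ≠ 0 := by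
    intro s hs
    have hs' : s ∈ Set.Ioc (0:ℝ) r0 := ⟨hs.1, hs.2.trans (min_le_left _ _)⟩
    have hmem := hr0sub hs'
    simp only [Set.mem_Icc, Set.mem_setOf_eq] at hmem
    have hlow : 1 - ε' ≤ μ (A ∩ closedBall y s) / μ (closedBall y s) := hmem.1
    have hne : μ (A ∩ closedBall y s) ≠ 0 := by
      intro h0
      rw [h0, ENNReal.zero_div] at hlow
      have : (1:ℝ≥0∞) ≤ ε' := by simpa using tsub_eq_zero_iff_le.mp (le_antisymm hlow bot_le)
      have : ε' ≤ 1/2 := min_le_right _ _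
      have := le_trans ‹(1:ℝ≥0∞) ≤ ε'› this
      norm_num at this
    refine ⟨?_, hne⟩
    have hcbne : μ (closedBall y s) ≠ 0 := fun h0 => hne (le_antisymm
      (le_trans (measure_mono Set.inter_subset_right) h0.le) bot_le)
    have hcbfin : μ (closedBall y s) ≠ ∞ := by
      refine (lt_of_le_of_lt (measure_mono ?_) hUfin).ne
      refine subset_trans ?_ hRU
      intro x hx
      have : dist x y ≤ s := hx
      have : s < R := lt_of_le_of_lt (hs.2.trans (min_le_right _ _)) (by linarith)
      exact mem_ball.2 (lt_of_le_of_lt hx this)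
    rw [ENNReal.le_div_iff_mul_le (Or.inl hcbne) (Or.inl hcbfin)] at hlow
    exact hlow
  have hIoc : Set.Ioc (0:ℝ) (min r0 (R/2)) ∈ nhdsWithin (0:ℝ) (Set.Ioi 0) :=
    Ioc_mem_nhdsGT_of_mem ⟨le_rfl, lt_min hr0 (by linarith)⟩
  filter_upwards [hIoc] with r hr
  have hrpos : (0:ℝ) < r := hr.1
  -- the increasing sequence of closed balls
  set seq : ℕ → ℝ := fun n => r - r / (n + 2) with hseq
  have hseqpos : ∀ n, 0 < seq n := by
    intro n
    have h1 : r / (n + 2) < r := by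
      rw [div_lt_iff₀ (by positivity)]
      nlinarith [Nat.cast_nonneg (α := ℝ) n]
    simpa [hseq] using sub_pos.2 h1
  have hseqlt : ∀ n, seq n < r := by
    intro n
    have : 0 < r / (n + 2) := by positivity
    simp [hseq]; linarith
  have hmono : Monotone seq := by
    intro a b hab
    have : r / (b + 2) ≤ r / (a + 2) := by
      apply div_le_div_of_nonneg_left hrpos.le (by positivity)
      exact_mod_cast by exact_mod_cast add_le_add_left (Nat.cast_le.2 hab) 2
    simp only [hseq]; linarith
  have hcover : ball y r = ⋃ n, closedBall y (seq n) := by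
    ext x
    simp only [mem_ball, Set.mem_iUnion, mem_closedBall]
    constructor
    · intro hx
      obtain ⟨n, hn⟩ := exists_nat_gt (r / (r - dist x y))
      refine ⟨n, ?_⟩
      have hd : 0 < r - dist x y := by linarith
      have h2 : r / (n + 2) ≤ r - dist x y := by
        rw [div_le_iff₀ (by positivity)]
        have : r / (r - dist x y) < n + 2 := by
          have : (n:ℝ) ≤ n + 2 := by linarith
          linarith
        calc r = (r / (r - dist x y)) * (r - dist x y) := by field_simp
          _ ≤ (n + 2) * (r - dist x y) := by nlinarith
          _ = (r - dist x y) * (n + 2) := by ring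
      simp only [hseq]; linarith
    · rintro ⟨n, hn⟩
      exact lt_of_le_of_lt hn (hseqlt n)
  have hseqmem : ∀ n, seq n ∈ Set.Ioc (0:ℝ) (min r0 (R/2)) :=
    fun n => ⟨hseqpos n, (hseqlt n).le.trans hr.2⟩
  have hbne : μ (ball y r) ≠ 0 := by
    intro h0
    exact (key (seq 0) (hseqmem 0)).2 (le_antisymm (le_trans (measure_mono
      (Set.inter_subset_right.trans (by rw [hcover]; exact Set.subset_iUnion (fun n => closedBall y (seq n)) 0))) h0.le) bot_le)
  have hbfin : μ (ball y r) ≠ ∞ := by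
    refine (lt_of_le_of_lt (measure_mono ?_) hUfin).ne
    refine subset_trans ?_ hRU
    apply ball_subset_ball
    have := hr.2.trans (min_le_right r0 (R/2))
    linarith
  constructor
  · -- lower bound
    have hεε' : (1:ℝ≥0∞) - ε ≤ 1 - ε' := tsub_le_tsub_left (min_le_left _ _) 1
    refine le_trans hεε' ?_
    rw [ENNReal.le_div_iff_mul_le (Or.inl hbne) (Or.inl hbfin)]
    have hdir : Directed (· ⊆ ·) fun n => closedBall y (seq n) := by
      intro a b
      rcases le_total a b with hab | hab
      · exact ⟨b, closedBall_subset_closedBall (hmono hab), subset_rfl⟩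
      · exact ⟨a, subset_rfl, closedBall_subset_closedBall (hmono hab)⟩
    calc (1 - ε') * μ (ball y r) = (1 - ε') * ⨆ n, μ (closedBall y (seq n)) := by
          rw [hcover, hdir.measure_iUnion]
      _ = ⨆ n, (1 - ε') * μ (closedBall y (seq n)) := ENNReal.mul_iSup _ _
      _ ≤ μ (ball y r ∩ A) := by
          refine iSup_le fun n => le_trans (key (seq n) (hseqmem n)).1 (measure_mono ?_)
          intro x hx
          refine ⟨?_, hx.1⟩
          exact lt_of_le_of_lt hx.2 (hseqlt n)
  · -- upper bound
    refine le_trans ?_ (le_add_right le_rfl)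
    rw [ENNReal.div_le_iff hbne hbfin, one_mul]
    exact measure_mono Set.inter_subset_left

/-- If `μ'` and `ν` are locally finite Borel measures on `ℝ^m` with `μ' ≪ ν`, then
`μ'`-almost every `y` is a bounded `(μ',ν)`-density point. -/
theorem stmt4 {m : ℕ} (μ' ν : Measure (EuclideanSpace ℝ (Fin m)))
    [IsLocallyFiniteMeasure μ'] [IsLocallyFiniteMeasure ν]
    (hac : μ' ≪ ν) :
    ∀ᵐ y ∂μ', IsBoundedDensityPoint μ' ν y := by
  set J := μ'.rnDeriv ν with hJ
  set A : ℕ → Set (EuclideanSpace ℝ (Fin m)) := fun n =>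
    {x | ENNReal.ofReal (1 / ((n:ℝ)+1)) ≤ J x ∧ J x ≤ ENNReal.ofReal ((n:ℝ)+1)} with hA
  have hmeas : ∀ n, MeasurableSet (A n) := by
    intro n
    exact (μ'.measurable_rnDeriv ν) measurableSet_Icc
  have H1 : ∀ n, ∀ᵐ y ∂μ', y ∈ A n →
      Tendsto (fun r : ℝ => ν (A n ∩ closedBall y r) / ν (closedBall y r))
        (nhdsWithin 0 (Set.Ioi 0)) (nhds 1) := by
    intro n
    refine hac.ae_le ?_
    filter_upwards [Besicovitch.ae_tendsto_measure_inter_div_of_measurableSet ν (hmeas n)]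
      with y hy hmem
    simpa [Set.indicator_of_mem hmem] using hy
  have H2 : ∀ n, ∀ᵐ y ∂μ', y ∈ A n →
      Tendsto (fun r : ℝ => μ' (A n ∩ closedBall y r) / μ' (closedBall y r))
        (nhdsWithin 0 (Set.Ioi 0)) (nhds 1) := by
    intro n
    filter_upwards [Besicovitch.ae_tendsto_measure_inter_div_of_measurableSet μ' (hmeas n)]
      with y hy hmem
    simpa [Set.indicator_of_mem hmem] using hy
  filter_upwards [Measure.rnDeriv_pos hac, hac.ae_le (Measure.rnDeriv_lt_top μ' ν),
    ae_all_iff.2 H1, ae_all_iff.2 H2] with y hy0 hyt h1 h2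
  -- choose n large
  have htR : 0 < (J y).toReal := ENNReal.toReal_pos hy0.ne' hyt.ne
  obtain ⟨n, hn⟩ := exists_nat_ge (max (J y).toReal (1 / (J y).toReal))
  have hn1 : (J y).toReal ≤ (n:ℝ) + 1 := le_trans (le_trans (le_max_left _ _) hn) (by linarith)
  have hn2 : 1 / ((n:ℝ)+1) ≤ (J y).toReal := by
    have h1n : 1 / (J y).toReal ≤ (n:ℝ) + 1 := le_trans (le_trans (le_max_right _ _) hn) (by linarith)
    rw [div_le_iff₀ htR] at h1n
    rw [div_le_iff₀ (by positivity)]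
    linarith
  have hmem : y ∈ A n := by
    constructor
    · rw [show J y = ENNReal.ofReal (J y).toReal from (ENNReal.ofReal_toReal hyt.ne).symm]
      exact ENNReal.ofReal_le_ofReal hn2
    · rw [show J y = ENNReal.ofReal (J y).toReal from (ENNReal.ofReal_toReal hyt.ne).symm]
      exact ENNReal.ofReal_le_ofReal hn1
  exact ⟨(n:ℝ) + 1, by positivity,
    aux_ball_of_closedBall ν y (A n) (h1 n hmem),
    aux_ball_of_closedBall μ' y (A n) (h2 n hmem)⟩
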